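/- The product of two positive log-concave finite sequences of coefficients (as polynomials) is positive and log-concave; consequently, any product of quantum integers [n]_q = 1 + q + ... + q^{n−1} has a log-concave, positive coefficient sequence. -/

import Mathlib

open Polynomial Finset

/-- A polynomial has a positive coefficient sequence (no internal zeros) if all
coefficients up to its degree are positive. -/
def PosCoeffs (P : Polynomial ℤ) : Prop :=
  ∀ i ≤ P.natDegree, 0 < P.coeff i

/-- A polynomial has a log-concave coefficient sequence if `a_i² ≥ a_{i-1} a_{i+1}`. -/
def LogConcaveCoeffs (P : Polynomial ℤ) : Prop :=
  ∀ i : ℕ, 1 ≤ i → P.coeff (i - 1) * P.coeff (i + 1) ≤ P.coeff i ^ 2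

/-- The quantum integer `[n]_q = 1 + q + ⋯ + q^{n-1}` as a polynomial. -/
noncomputable def quantumInt (n : ℕ) : Polynomial ℤ :=
  ∑ i ∈ Finset.range n, Polynomial.X ^ i


lemma sum_shift {a b : ℤ} (hab : a ≤ b) (G : ℤ → ℤ) (h1 : G (a-1) = 0) (h2 : G b = 0) :
    ∑ x ∈ Finset.Icc a b, G (x-1) = ∑ x ∈ Finset.Icc a b, G x := by
  have L : ∑ x ∈ Finset.Icc a b, G (x-1) = ∑ y ∈ Finset.Icc (a-1) (b-1), G y := by
    have e1 : Finset.Icc a b = Finset.map ⟨fun y => y + 1, add_left_injective 1⟩ (Finset.Icc (a-1) (b-1)) := by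
      ext x
      simp only [Finset.mem_map, Finset.mem_Icc, Function.Embedding.coeFn_mk]
      constructor
      · intro h; exact ⟨x - 1, by omega, by omega⟩
      · rintro ⟨y, hy, rfl⟩; omega
    rw [e1, Finset.sum_map]
    apply Finset.sum_congr rfl
    intro y _
    simp only [Function.Embedding.coeFn_mk, add_sub_cancel_right]
  rw [L]
  have n1 : (a-1) ∉ Finset.Icc a b := by simp only [Finset.mem_Icc]; omega
  have n2 : b ∉ Finset.Icc (a-1) (b-1) := by simp only [Finset.mem_Icc]; omega
  have d1 : Finset.Icc (a-1) b = insert (a-1) (Finset.Icc a b) := by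
    ext x; simp only [Finset.mem_Icc, Finset.mem_insert]; omega
  have d2 : Finset.Icc (a-1) b = insert b (Finset.Icc (a-1) (b-1)) := by
    ext x; simp only [Finset.mem_Icc, Finset.mem_insert]; omega
  have E1 : ∑ x ∈ Finset.Icc (a-1) b, G x = ∑ x ∈ Finset.Icc a b, G x := by
    rw [d1, Finset.sum_insert n1, h1, zero_add]
  have E2 : ∑ x ∈ Finset.Icc (a-1) b, G x = ∑ x ∈ Finset.Icc (a-1) (b-1), G x := by
    rw [d2, Finset.sum_insert n2, h2, zero_add]
  rw [← E2, E1]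

def Aa (f g : ℤ → ℤ) (m k l : ℤ) : ℤ := f k * f l * (g (m-k) * g (m-l))
def Bb (f g : ℤ → ℤ) (m k l : ℤ) : ℤ := f k * f l * (g (m-1-k) * g (m+1-l))
def Cc (f g : ℤ → ℤ) (m k l : ℤ) : ℤ := f k * f l * (g (m+1-k) * g (m-1-l))
def Ee (f g : ℤ → ℤ) (m k l : ℤ) : ℤ :=
  (f k * f (l-1) - f (k-1) * f l) * (g (m-k) * g (m+1-l) - g (m+1-k) * g (m-l))

lemma big_identity (f g : ℤ → ℤ) (N : ℤ) (hN : 0 ≤ N)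
    (hf0 : ∀ x : ℤ, x < 0 → f x = 0) (hfN : ∀ x : ℤ, N ≤ x → f x = 0) (m : ℤ) :
    ∑ k ∈ Finset.Icc (-2:ℤ) N, ∑ l ∈ Finset.Icc (-2:ℤ) N, (Aa f g m k l - Bb f g m k l)
    = ∑ k ∈ Finset.Icc (-2:ℤ) N, ∑ l ∈ Finset.Icc (-2:ℤ) N, (if k < l then Ee f g m k l else 0) := by
  -- split E pointwise into four products
  have split : ∀ k l : ℤ, (if k < l then Ee f g m k l else 0)
      = (if k < l then f k * f (l-1) * (g (m-k) * g (m+1-l)) else 0)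
      + (if k < l then f (k-1) * f l * (g (m+1-k) * g (m-l)) else 0)
      - (if k < l then f k * f (l-1) * (g (m+1-k) * g (m-l)) else 0)
      - (if k < l then f (k-1) * f l * (g (m-k) * g (m+1-l)) else 0) := by
    intro k l
    unfold Ee
    split_ifs
    · ring
    · ring
  -- T1 : inner shift
  have hT1 : ∑ k ∈ Finset.Icc (-2:ℤ) N, ∑ l ∈ Finset.Icc (-2:ℤ) N,
        (if k < l then f k * f (l-1) * (g (m-k) * g (m+1-l)) else 0)
      = ∑ k ∈ Finset.Icc (-2:ℤ) N, ∑ l ∈ Finset.Icc (-2:ℤ) N,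
        (if k ≤ l then Aa f g m k l else 0) := by
    apply Finset.sum_congr rfl
    intro k _
    calc ∑ l ∈ Finset.Icc (-2:ℤ) N, (if k < l then f k * f (l-1) * (g (m-k) * g (m+1-l)) else 0)
        = ∑ l ∈ Finset.Icc (-2:ℤ) N,
            (fun y => if k ≤ y then f k * f y * (g (m-k) * g (m-y)) else 0) (l-1) := by
          apply Finset.sum_congr rfl
          intro l _
          show (if k < l then f k * f (l-1) * (g (m-k) * g (m+1-l)) else 0)
              = (if k ≤ l-1 then f k * f (l-1) * (g (m-k) * g (m-(l-1))) else 0)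
          rw [show m-(l-1) = m+1-l from by ring]
          by_cases h : k < l
          · rw [if_pos h, if_pos (show k ≤ l-1 by omega)]
          · rw [if_neg h, if_neg (show ¬ k ≤ l-1 by omega)]
      _ = ∑ l ∈ Finset.Icc (-2:ℤ) N,
            (fun y => if k ≤ y then f k * f y * (g (m-k) * g (m-y)) else 0) l := by
          refine sum_shift (by omega) (fun y => if k ≤ y then f k * f y * (g (m-k) * g (m-y)) else 0) ?_ ?_
          · show (if k ≤ (-2:ℤ)-1 then f k * f ((-2:ℤ)-1) * (g (m-k) * g (m-((-2:ℤ)-1))) else 0) = 0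
            rw [hf0 ((-2:ℤ)-1) (by omega)]
            split_ifs <;> ring
          · show (if k ≤ N then f k * f N * (g (m-k) * g (m-N)) else 0) = 0
            rw [hfN N le_rfl]
            split_ifs <;> ring
      _ = ∑ l ∈ Finset.Icc (-2:ℤ) N, (if k ≤ l then Aa f g m k l else 0) := rfl
  -- T2 : outer shift
  have hT2 : ∑ k ∈ Finset.Icc (-2:ℤ) N, ∑ l ∈ Finset.Icc (-2:ℤ) N,
        (if k < l then f (k-1) * f l * (g (m+1-k) * g (m-l)) else 0)
      = ∑ k ∈ Finset.Icc (-2:ℤ) N, ∑ l ∈ Finset.Icc (-2:ℤ) N,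
        (if k+1 < l then Aa f g m k l else 0) := by
    calc ∑ k ∈ Finset.Icc (-2:ℤ) N, ∑ l ∈ Finset.Icc (-2:ℤ) N,
          (if k < l then f (k-1) * f l * (g (m+1-k) * g (m-l)) else 0)
        = ∑ k ∈ Finset.Icc (-2:ℤ) N,
            (fun x => ∑ l ∈ Finset.Icc (-2:ℤ) N,
              (if x+1 < l then f x * f l * (g (m-x) * g (m-l)) else 0)) (k-1) := by
          apply Finset.sum_congr rfl
          intro k _
          show _ = ∑ l ∈ Finset.Icc (-2:ℤ) N,
              (if (k-1)+1 < l then f (k-1) * f l * (g (m-(k-1)) * g (m-l)) else 0)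
          rw [show m-(k-1) = m+1-k from by ring]
          apply Finset.sum_congr rfl
          intro l _
          by_cases h : k < l
          · rw [if_pos h, if_pos (show (k-1)+1 < l by omega)]
          · rw [if_neg h, if_neg (show ¬ ((k-1)+1 < l) by omega)]
      _ = ∑ k ∈ Finset.Icc (-2:ℤ) N,
            (fun x => ∑ l ∈ Finset.Icc (-2:ℤ) N,
              (if x+1 < l then f x * f l * (g (m-x) * g (m-l)) else 0)) k := by
          refine sum_shift (by omega) (fun x => ∑ l ∈ Finset.Icc (-2:ℤ) N,
              (if x+1 < l then f x * f l * (g (m-x) * g (m-l)) else 0)) ?_ ?_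
          · show (∑ l ∈ Finset.Icc (-2:ℤ) N,
              (if ((-2:ℤ)-1)+1 < l then f ((-2:ℤ)-1) * f l * (g (m-((-2:ℤ)-1)) * g (m-l)) else 0)) = 0
            apply Finset.sum_eq_zero
            intro l _
            rw [hf0 ((-2:ℤ)-1) (by omega)]
            split_ifs <;> ring
          · show (∑ l ∈ Finset.Icc (-2:ℤ) N,
              (if N+1 < l then f N * f l * (g (m-N) * g (m-l)) else 0)) = 0
            apply Finset.sum_eq_zero
            intro l _
            rw [hfN N le_rfl]
            split_ifs <;> ring
      _ = ∑ k ∈ Finset.Icc (-2:ℤ) N, ∑ l ∈ Finset.Icc (-2:ℤ) N,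
            (if k+1 < l then Aa f g m k l else 0) := rfl
  -- T3 : inner shift
  have hT3 : ∑ k ∈ Finset.Icc (-2:ℤ) N, ∑ l ∈ Finset.Icc (-2:ℤ) N,
        (if k < l then f k * f (l-1) * (g (m+1-k) * g (m-l)) else 0)
      = ∑ k ∈ Finset.Icc (-2:ℤ) N, ∑ l ∈ Finset.Icc (-2:ℤ) N,
        (if k ≤ l then Cc f g m k l else 0) := by
    apply Finset.sum_congr rfl
    intro k _
    calc ∑ l ∈ Finset.Icc (-2:ℤ) N, (if k < l then f k * f (l-1) * (g (m+1-k) * g (m-l)) else 0)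
        = ∑ l ∈ Finset.Icc (-2:ℤ) N,
            (fun y => if k ≤ y then f k * f y * (g (m+1-k) * g (m-1-y)) else 0) (l-1) := by
          apply Finset.sum_congr rfl
          intro l _
          show (if k < l then f k * f (l-1) * (g (m+1-k) * g (m-l)) else 0)
              = (if k ≤ l-1 then f k * f (l-1) * (g (m+1-k) * g (m-1-(l-1))) else 0)
          rw [show m-1-(l-1) = m-l from by ring]
          by_cases h : k < l
          · rw [if_pos h, if_pos (show k ≤ l-1 by omega)]
          · rw [if_neg h, if_neg (show ¬ k ≤ l-1 by omega)]
      _ = ∑ l ∈ Finset.Icc (-2:ℤ) N,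
            (fun y => if k ≤ y then f k * f y * (g (m+1-k) * g (m-1-y)) else 0) l := by
          refine sum_shift (by omega) (fun y => if k ≤ y then f k * f y * (g (m+1-k) * g (m-1-y)) else 0) ?_ ?_
          · show (if k ≤ (-2:ℤ)-1 then f k * f ((-2:ℤ)-1) * (g (m+1-k) * g (m-1-((-2:ℤ)-1))) else 0) = 0
            rw [hf0 ((-2:ℤ)-1) (by omega)]
            split_ifs <;> ring
          · show (if k ≤ N then f k * f N * (g (m+1-k) * g (m-1-N)) else 0) = 0
            rw [hfN N le_rfl]
            split_ifs <;> ring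
      _ = ∑ l ∈ Finset.Icc (-2:ℤ) N, (if k ≤ l then Cc f g m k l else 0) := rfl
  -- T4 : outer shift
  have hT4 : ∑ k ∈ Finset.Icc (-2:ℤ) N, ∑ l ∈ Finset.Icc (-2:ℤ) N,
        (if k < l then f (k-1) * f l * (g (m-k) * g (m+1-l)) else 0)
      = ∑ k ∈ Finset.Icc (-2:ℤ) N, ∑ l ∈ Finset.Icc (-2:ℤ) N,
        (if k+1 < l then Bb f g m k l else 0) := by
    calc ∑ k ∈ Finset.Icc (-2:ℤ) N, ∑ l ∈ Finset.Icc (-2:ℤ) N,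
          (if k < l then f (k-1) * f l * (g (m-k) * g (m+1-l)) else 0)
        = ∑ k ∈ Finset.Icc (-2:ℤ) N,
            (fun x => ∑ l ∈ Finset.Icc (-2:ℤ) N,
              (if x+1 < l then f x * f l * (g (m-1-x) * g (m+1-l)) else 0)) (k-1) := by
          apply Finset.sum_congr rfl
          intro k _
          show _ = ∑ l ∈ Finset.Icc (-2:ℤ) N,
              (if (k-1)+1 < l then f (k-1) * f l * (g (m-1-(k-1)) * g (m+1-l)) else 0)
          rw [show m-1-(k-1) = m-k from by ring]
          apply Finset.sum_congr rfl
          intro l _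
          by_cases h : k < l
          · rw [if_pos h, if_pos (show (k-1)+1 < l by omega)]
          · rw [if_neg h, if_neg (show ¬ ((k-1)+1 < l) by omega)]
      _ = ∑ k ∈ Finset.Icc (-2:ℤ) N,
            (fun x => ∑ l ∈ Finset.Icc (-2:ℤ) N,
              (if x+1 < l then f x * f l * (g (m-1-x) * g (m+1-l)) else 0)) k := by
          refine sum_shift (by omega) (fun x => ∑ l ∈ Finset.Icc (-2:ℤ) N,
              (if x+1 < l then f x * f l * (g (m-1-x) * g (m+1-l)) else 0)) ?_ ?_
          · show (∑ l ∈ Finset.Icc (-2:ℤ) N,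
              (if ((-2:ℤ)-1)+1 < l then f ((-2:ℤ)-1) * f l * (g (m-1-((-2:ℤ)-1)) * g (m+1-l)) else 0)) = 0
            apply Finset.sum_eq_zero
            intro l _
            rw [hf0 ((-2:ℤ)-1) (by omega)]
            split_ifs <;> ring
          · show (∑ l ∈ Finset.Icc (-2:ℤ) N,
              (if N+1 < l then f N * f l * (g (m-1-N) * g (m+1-l)) else 0)) = 0
            apply Finset.sum_eq_zero
            intro l _
            rw [hfN N le_rfl]
            split_ifs <;> ring
      _ = ∑ k ∈ Finset.Icc (-2:ℤ) N, ∑ l ∈ Finset.Icc (-2:ℤ) N,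
            (if k+1 < l then Bb f g m k l else 0) := rfl
  -- swap lemmas
  have swapA : ∑ k ∈ Finset.Icc (-2:ℤ) N, ∑ l ∈ Finset.Icc (-2:ℤ) N,
        (if k < l then Aa f g m k l else 0)
      = ∑ k ∈ Finset.Icc (-2:ℤ) N, ∑ l ∈ Finset.Icc (-2:ℤ) N,
        (if l < k then Aa f g m k l else 0) := by
    rw [Finset.sum_comm]
    apply Finset.sum_congr rfl
    intro k _
    apply Finset.sum_congr rfl
    intro l _
    split_ifs with h
    · unfold Aa; ring
    · rfl
  have swapC : ∑ k ∈ Finset.Icc (-2:ℤ) N, ∑ l ∈ Finset.Icc (-2:ℤ) N,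
        (if k ≤ l then Cc f g m k l else 0)
      = ∑ k ∈ Finset.Icc (-2:ℤ) N, ∑ l ∈ Finset.Icc (-2:ℤ) N,
        (if l ≤ k then Bb f g m k l else 0) := by
    rw [Finset.sum_comm]
    apply Finset.sum_congr rfl
    intro k _
    apply Finset.sum_congr rfl
    intro l _
    split_ifs with h
    · unfold Cc Bb; ring
    · rfl
  -- pointwise merged identity
  have ptm : ∀ k l : ℤ,
      (if k ≤ l then Aa f g m k l else 0) + (if k+1 < l then Aa f g m k l else 0)
        + (if l < k then Aa f g m k l else 0)
      = ((Aa f g m k l - Bb f g m k l) + (if k < l then Aa f g m k l else 0)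
        + (if l ≤ k then Bb f g m k l else 0) + (if k+1 < l then Bb f g m k l else 0)) := by
    intro k l
    by_cases hsp : l = k+1
    · subst hsp
      have hAB : Aa f g m k (k+1) = Bb f g m k (k+1) := by
        unfold Aa Bb
        rw [show m-(k+1) = m-1-k from by ring, show m+1-(k+1) = m-k from by ring]
        ring
      split_ifs <;> first | (exfalso; omega) | linarith [hAB]
    · split_ifs <;> first | ring1 | (exfalso; omega)
  -- merge sums
  have merged :
      (∑ k ∈ Finset.Icc (-2:ℤ) N, ∑ l ∈ Finset.Icc (-2:ℤ) N, (if k ≤ l then Aa f g m k l else 0))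
      + (∑ k ∈ Finset.Icc (-2:ℤ) N, ∑ l ∈ Finset.Icc (-2:ℤ) N, (if k+1 < l then Aa f g m k l else 0))
      + (∑ k ∈ Finset.Icc (-2:ℤ) N, ∑ l ∈ Finset.Icc (-2:ℤ) N, (if l < k then Aa f g m k l else 0))
      = (∑ k ∈ Finset.Icc (-2:ℤ) N, ∑ l ∈ Finset.Icc (-2:ℤ) N, (Aa f g m k l - Bb f g m k l))
      + (∑ k ∈ Finset.Icc (-2:ℤ) N, ∑ l ∈ Finset.Icc (-2:ℤ) N, (if k < l then Aa f g m k l else 0))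
      + (∑ k ∈ Finset.Icc (-2:ℤ) N, ∑ l ∈ Finset.Icc (-2:ℤ) N, (if l ≤ k then Bb f g m k l else 0))
      + (∑ k ∈ Finset.Icc (-2:ℤ) N, ∑ l ∈ Finset.Icc (-2:ℤ) N, (if k+1 < l then Bb f g m k l else 0)) := by
    rw [← Finset.sum_add_distrib, ← Finset.sum_add_distrib, ← Finset.sum_add_distrib,
        ← Finset.sum_add_distrib, ← Finset.sum_add_distrib]
    apply Finset.sum_congr rfl
    intro k _
    rw [← Finset.sum_add_distrib, ← Finset.sum_add_distrib, ← Finset.sum_add_distrib,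
        ← Finset.sum_add_distrib, ← Finset.sum_add_distrib]
    exact Finset.sum_congr rfl (fun l _ => ptm k l)
  -- final assembly
  symm
  calc ∑ k ∈ Finset.Icc (-2:ℤ) N, ∑ l ∈ Finset.Icc (-2:ℤ) N, (if k < l then Ee f g m k l else 0)
      = ∑ k ∈ Finset.Icc (-2:ℤ) N, ∑ l ∈ Finset.Icc (-2:ℤ) N,
          ((if k < l then f k * f (l-1) * (g (m-k) * g (m+1-l)) else 0)
          + (if k < l then f (k-1) * f l * (g (m+1-k) * g (m-l)) else 0)
          - (if k < l then f k * f (l-1) * (g (m+1-k) * g (m-l)) else 0)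
          - (if k < l then f (k-1) * f l * (g (m-k) * g (m+1-l)) else 0)) :=
        Finset.sum_congr rfl (fun k _ => Finset.sum_congr rfl (fun l _ => split k l))
    _ = (∑ k ∈ Finset.Icc (-2:ℤ) N, ∑ l ∈ Finset.Icc (-2:ℤ) N,
          (if k < l then f k * f (l-1) * (g (m-k) * g (m+1-l)) else 0))
      + (∑ k ∈ Finset.Icc (-2:ℤ) N, ∑ l ∈ Finset.Icc (-2:ℤ) N,
          (if k < l then f (k-1) * f l * (g (m+1-k) * g (m-l)) else 0))
      - (∑ k ∈ Finset.Icc (-2:ℤ) N, ∑ l ∈ Finset.Icc (-2:ℤ) N,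
          (if k < l then f k * f (l-1) * (g (m+1-k) * g (m-l)) else 0))
      - (∑ k ∈ Finset.Icc (-2:ℤ) N, ∑ l ∈ Finset.Icc (-2:ℤ) N,
          (if k < l then f (k-1) * f l * (g (m-k) * g (m+1-l)) else 0)) := by
        simp only [Finset.sum_sub_distrib, Finset.sum_add_distrib]
    _ = ∑ k ∈ Finset.Icc (-2:ℤ) N, ∑ l ∈ Finset.Icc (-2:ℤ) N, (Aa f g m k l - Bb f g m k l) := by
        rw [hT1, hT2, hT3, hT4, swapC] at *
        linarith [merged, swapA]

noncomputable def ecoeff (P : Polynomial ℤ) (n : ℤ) : ℤ :=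
  if 0 ≤ n then P.coeff n.toNat else 0

lemma coeff_nn {P : Polynomial ℤ} (hP : PosCoeffs P) (i : ℕ) : 0 ≤ P.coeff i := by
  rcases le_or_gt i P.natDegree with h | h
  · exact (hP i h).le
  · rw [Polynomial.coeff_eq_zero_of_natDegree_lt h]

lemma ecoeff_neg (P : Polynomial ℤ) {n : ℤ} (h : n < 0) : ecoeff P n = 0 := if_neg (by omega)

lemma ecoeff_big {P : Polynomial ℤ} {n : ℤ} (h : (P.natDegree : ℤ) < n) : ecoeff P n = 0 := by
  unfold ecoeff
  rw [if_pos (by omega)]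
  exact Polynomial.coeff_eq_zero_of_natDegree_lt (by omega)

lemma chain (P : Polynomial ℤ) (hpos : PosCoeffs P) (hlc : LogConcaveCoeffs P) :
    ∀ d i : ℕ, 1 ≤ i → i + d + 1 ≤ P.natDegree →
      P.coeff (i-1) * P.coeff (i+d+1) ≤ P.coeff i * P.coeff (i+d) := by
  intro d
  induction d with
  | zero =>
    intro i hi _
    simpa [pow_two] using hlc i hi
  | succ d ih =>
    intro i hi hdeg
    have e : i + (d+1) = i + d + 1 := rfl
    have h1 := ih i hi (by omega)
    have h2 : P.coeff (i+d) * P.coeff (i+d+2) ≤ P.coeff (i+d+1) ^ 2 := by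
      have := hlc (i+d+1) (by omega)
      simpa using this
    have p1 : 0 < P.coeff (i+d) := hpos _ (by omega)
    have p2 : 0 < P.coeff (i+d+1) := hpos _ (by omega)
    have n1 : 0 ≤ P.coeff (i-1) := coeff_nn hpos _
    have n2 : 0 ≤ P.coeff (i+d+2) := coeff_nn hpos _
    have n3 : 0 ≤ P.coeff i := coeff_nn hpos _
    have goal : P.coeff (i-1) * P.coeff (i+d+2) ≤ P.coeff i * P.coeff (i+d+1) := by
      nlinarith [mul_le_mul_of_nonneg_right h1 n2, mul_le_mul_of_nonneg_left h2 n3]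
    calc P.coeff (i-1) * P.coeff (i + (d+1) + 1) = P.coeff (i-1) * P.coeff (i+d+2) := rfl
      _ ≤ P.coeff i * P.coeff (i+d+1) := goal
      _ = P.coeff i * P.coeff (i + (d+1)) := rfl

lemma ecoeff_lc {P : Polynomial ℤ} (hpos : PosCoeffs P) (hlc : LogConcaveCoeffs P) :
    ∀ s t : ℤ, s ≤ t → ecoeff P (s-1) * ecoeff P (t+1) ≤ ecoeff P s * ecoeff P t := by
  intro s t hst
  have hnn : ∀ n : ℤ, 0 ≤ ecoeff P n := by
    intro n; unfold ecoeff; split_ifs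
    · exact coeff_nn hpos _
    · exact le_refl 0
  rcases le_or_gt s 0 with hs | hs
  · rw [ecoeff_neg P (by omega : s - 1 < 0), zero_mul]
    exact mul_nonneg (hnn s) (hnn t)
  · rcases le_or_gt ((P.natDegree : ℤ)) t with ht | ht
    · rw [ecoeff_big (by omega : (P.natDegree : ℤ) < t + 1), mul_zero]
      exact mul_nonneg (hnn s) (hnn t)
    · have h1 : (1:ℤ) ≤ s := hs
      have := chain P hpos hlc (t - s).toNat s.toNat (by omega) (by omega)
      unfold ecoeff
      rw [if_pos (by omega), if_pos (by omega), if_pos (by omega), if_pos (by omega)]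
      have e1 : (s-1).toNat = s.toNat - 1 := by omega
      have e2 : (t+1).toNat = s.toNat + (t-s).toNat + 1 := by omega
      have e3 : t.toNat = s.toNat + (t-s).toNat := by omega
      rw [e1, e2, e3]
      exact this

lemma conv_eq (P Q : Polynomial ℤ) {N : ℤ} (hN : (P.natDegree : ℤ) < N) (n : ℤ) :
    ecoeff (P*Q) n = ∑ k ∈ Finset.Icc (-2:ℤ) N, ecoeff P k * ecoeff Q (n-k) := by
  rcases lt_or_ge n 0 with hn | hn
  · rw [ecoeff_neg _ hn]
    symm
    apply Finset.sum_eq_zero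
    intro k _
    rcases lt_or_ge k 0 with hk0 | hk0
    · rw [ecoeff_neg _ hk0, zero_mul]
    · rw [ecoeff_neg _ (by omega : n - k < 0), mul_zero]
  · have hstep1 : ∑ k ∈ Finset.Icc (-2:ℤ) N, ecoeff P k * ecoeff Q (n-k)
        = ∑ k ∈ Finset.Icc (0:ℤ) n, ecoeff P k * ecoeff Q (n-k) := by
      have hsub1 : Finset.Icc (-2:ℤ) N ⊆ Finset.Icc (-2:ℤ) (max N n) :=
        Finset.Icc_subset_Icc le_rfl (le_max_left _ _)
      have hsub2 : Finset.Icc (0:ℤ) n ⊆ Finset.Icc (-2:ℤ) (max N n) :=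
        Finset.Icc_subset_Icc (by omega) (le_max_right _ _)
      refine (Finset.sum_subset hsub1 ?_).trans (Finset.sum_subset hsub2 ?_).symm
      · intro x hx hnx
        simp only [Finset.mem_Icc] at hx hnx
        rw [ecoeff_big (by omega), zero_mul]
      · intro x hx hnx
        simp only [Finset.mem_Icc] at hx hnx
        rcases lt_or_ge x 0 with h0 | h0
        · rw [ecoeff_neg _ h0, zero_mul]
        · rw [ecoeff_neg _ (by omega : n - x < 0), mul_zero]
    rw [hstep1]
    have himg : Finset.Icc (0:ℤ) n
        = Finset.map ⟨fun a : ℕ => (a:ℤ), Nat.cast_injective⟩ (Finset.range (n.toNat+1)) := by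
      ext x
      simp only [Finset.mem_Icc, Finset.mem_map, Finset.mem_range, Function.Embedding.coeFn_mk]
      constructor
      · intro h
        refine ⟨x.toNat, ?_, ?_⟩ <;> omega
      · rintro ⟨a, ha, rfl⟩; constructor <;> omega
    rw [himg, Finset.sum_map]
    simp only [Function.Embedding.coeFn_mk]
    have hl : ecoeff (P*Q) n = (P*Q).coeff n.toNat := if_pos hn
    rw [hl, Polynomial.coeff_mul, Finset.Nat.sum_antidiagonal_eq_sum_range_succ_mk]
    apply Finset.sum_congr rfl
    intro a ha
    simp only [Finset.mem_range] at ha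
    have e1 : ecoeff P (a:ℤ) = P.coeff a := by
      unfold ecoeff; rw [if_pos (by positivity)]; simp
    have e2 : ecoeff Q (n - (a:ℤ)) = Q.coeff (n.toNat - a) := by
      unfold ecoeff; rw [if_pos (by omega)]; congr 1; omega
    rw [e1, e2]

lemma key (f g : ℤ → ℤ) (N : ℤ) (hN : 0 ≤ N)
    (hf0 : ∀ x : ℤ, x < 0 → f x = 0) (hfN : ∀ x : ℤ, N ≤ x → f x = 0)
    (hf2 : ∀ s t : ℤ, s ≤ t → f (s-1) * f (t+1) ≤ f s * f t)
    (hg2 : ∀ s t : ℤ, s ≤ t → g (s-1) * g (t+1) ≤ g s * g t)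
    (m : ℤ) :
    (∑ k ∈ Finset.Icc (-2:ℤ) N, f k * g (m-1-k)) * (∑ k ∈ Finset.Icc (-2:ℤ) N, f k * g (m+1-k))
      ≤ (∑ k ∈ Finset.Icc (-2:ℤ) N, f k * g (m-k)) ^ 2 := by
  rw [sq, ← sub_nonneg, Finset.sum_mul_sum, Finset.sum_mul_sum]
  have dd : ∑ k ∈ Finset.Icc (-2:ℤ) N, ∑ l ∈ Finset.Icc (-2:ℤ) N, (f k * g (m-k)) * (f l * g (m-l))
      - ∑ k ∈ Finset.Icc (-2:ℤ) N, ∑ l ∈ Finset.Icc (-2:ℤ) N, (f k * g (m-1-k)) * (f l * g (m+1-l))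
      = ∑ k ∈ Finset.Icc (-2:ℤ) N, ∑ l ∈ Finset.Icc (-2:ℤ) N, (Aa f g m k l - Bb f g m k l) := by
    rw [← Finset.sum_sub_distrib]
    apply Finset.sum_congr rfl
    intro k _
    rw [← Finset.sum_sub_distrib]
    apply Finset.sum_congr rfl
    intro l _
    unfold Aa Bb
    ring
  rw [dd, big_identity f g N hN hf0 hfN m]
  apply Finset.sum_nonneg
  intro k _
  apply Finset.sum_nonneg
  intro l _
  split_ifs with h
  · unfold Ee
    apply mul_nonneg
    · rw [sub_nonneg]
      have := hf2 k (l-1) (by omega)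
      rwa [show l-1+1 = l from by ring] at this
    · rw [sub_nonneg]
      have := hg2 (m+1-l) (m-k) (by omega)
      rw [show m+1-l-1 = m-l from by ring, show m-k+1 = m+1-k from by ring] at this
      nlinarith [this]
  · exact le_refl 0

lemma quantum_coeff (n j : ℕ) : (quantumInt n).coeff j = if j < n then 1 else 0 := by
  unfold quantumInt
  rw [Polynomial.finset_sum_coeff]
  simp only [Polynomial.coeff_X_pow]
  rw [Finset.sum_ite_eq (Finset.range n) j (fun _ => (1:ℤ))]
  simp [Finset.mem_range]

lemma quantum_deg (n : ℕ) : (quantumInt n).natDegree ≤ n - 1 := by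
  apply Polynomial.natDegree_le_iff_coeff_eq_zero.mpr
  intro m hm
  rw [quantum_coeff, if_neg (by omega)]

lemma quantum_pos (n : ℕ) (hn : 1 ≤ n) : PosCoeffs (quantumInt n) := by
  intro i hi
  have := quantum_deg n
  rw [quantum_coeff, if_pos (by omega)]
  norm_num

lemma quantum_lc (n : ℕ) : LogConcaveCoeffs (quantumInt n) := by
  intro i hi
  rw [quantum_coeff, quantum_coeff, quantum_coeff]
  by_cases h : i + 1 < n
  · rw [if_pos h, if_pos (by omega), if_pos (by omega)]
    norm_num
  · rw [if_neg h, mul_zero]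
    positivity

lemma one_pos' : PosCoeffs 1 := by
  intro i hi
  rw [Polynomial.natDegree_one] at hi
  interval_cases i
  simp

lemma one_lc : LogConcaveCoeffs 1 := by
  intro i hi
  have h0 : (1 : Polynomial ℤ).coeff (i+1) = 0 := by
    rw [Polynomial.coeff_one, if_neg (by omega : ¬ i + 1 = 0)]
  rw [h0, mul_zero]
  positivity


lemma prod_lemma (P Q : Polynomial ℤ) (hPp : PosCoeffs P) (hPl : LogConcaveCoeffs P)
    (hQp : PosCoeffs Q) (hQl : LogConcaveCoeffs Q) :
    PosCoeffs (P * Q) ∧ LogConcaveCoeffs (P * Q) := by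
  have hP0 : P ≠ 0 := by
    intro h
    have := hPp 0 (Nat.zero_le _)
    rw [h] at this
    simp at this
  have hQ0 : Q ≠ 0 := by
    intro h
    have := hQp 0 (Nat.zero_le _)
    rw [h] at this
    simp at this
  constructor
  · intro i hi
    rw [Polynomial.natDegree_mul hP0 hQ0] at hi
    rw [Polynomial.coeff_mul]
    apply Finset.sum_pos'
    · intro x _
      exact mul_nonneg (coeff_nn hPp _) (coeff_nn hQp _)
    · refine ⟨(min i P.natDegree, i - min i P.natDegree), ?_, ?_⟩
      · rw [Finset.HasAntidiagonal.mem_antidiagonal]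
        omega
      · exact mul_pos (hPp _ (by omega)) (hQp _ (by omega))
  · intro i hi
    have hN : ((P.natDegree : ℤ)) < (P.natDegree : ℤ) + 1 := by omega
    have e1 : (P*Q).coeff (i-1) = ecoeff (P*Q) ((i:ℤ)-1) := by
      unfold ecoeff
      rw [if_pos (by omega)]
      congr 1
      try omega
    have e2 : (P*Q).coeff i = ecoeff (P*Q) (i:ℤ) := by
      unfold ecoeff
      rw [if_pos (by omega)]
      congr 1
      try omega
    have e3 : (P*Q).coeff (i+1) = ecoeff (P*Q) ((i:ℤ)+1) := by
      unfold ecoeff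
      rw [if_pos (by omega)]
      congr 1
      try omega
    rw [e1, e2, e3]
    rw [conv_eq P Q hN ((i:ℤ)-1), conv_eq P Q hN ((i:ℤ)+1), conv_eq P Q hN (i:ℤ)]
    have := key (ecoeff P) (ecoeff Q) ((P.natDegree : ℤ) + 1) (by omega)
      (fun x hx => ecoeff_neg P hx) (fun x hx => ecoeff_big (by omega))
      (ecoeff_lc hPp hPl) (ecoeff_lc hQp hQl) (i:ℤ)
    convert this using 2


theorem product_log_concave_and_quantum_integers :
    (∀ P Q : Polynomial ℤ, PosCoeffs P → LogConcaveCoeffs P →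
      PosCoeffs Q → LogConcaveCoeffs Q →
      PosCoeffs (P * Q) ∧ LogConcaveCoeffs (P * Q)) ∧
    (∀ L : List ℕ, (∀ n ∈ L, 1 ≤ n) →
      PosCoeffs ((L.map quantumInt).prod) ∧ LogConcaveCoeffs ((L.map quantumInt).prod)) := by
  constructor
  · exact prod_lemma
  · intro L
    induction L with
    | nil =>
      intro _
      simp only [List.map_nil, List.prod_nil]
      exact ⟨one_pos', one_lc⟩
    | cons n L ih =>
      intro hL
      have h1 : 1 ≤ n := hL n (by simp)
      obtain ⟨ihp, ihl⟩ := ih (fun x hx => hL x (by simp [hx]))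
      simp only [List.map_cons, List.prod_cons]
      exact prod_lemma _ _ (quantum_pos n h1) (quantum_lc n) ihp ihl
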